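/- In a role-based concurrent game structure S with translation f(S) to an ordinary concurrent game structure, for every state q, every coalition A, and every CGS-strategy s_A at q, the set of successor states reachable under all complete extensions of the aggregated profile m(s_A)(q) in S equals the set of successor states reachable under all complete action tuples extending s_A(q) in f(S). Consequently force(S, A, q) = force(f(S), A, q). -/

import Mathlib

/-- Existence of a function with prescribed fiber sizes on a finset. -/
lemma exists_fn {Agt : Type*} [DecidableEq Agt] :
    ∀ (n : ℕ) (c : ℕ → ℕ) (T : Finset Agt),
    (∑ j ∈ Finset.range n, c j) = T.card →
    ∃ g : Agt → ℕ, (∀ i ∈ T, g i < n) ∧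
      ∀ j < n, (T.filter (fun i => g i = j)).card = c j := by
  intro n
  induction n with
  | zero =>
    intro c T h
    simp only [Finset.range_zero, Finset.sum_empty] at h
    have : T = ∅ := Finset.card_eq_zero.mp h.symm
    subst this
    exact ⟨fun _ => 0, by simp, fun j hj => absurd hj (Nat.not_lt_zero j)⟩
  | succ n ih =>
    intro c T h
    rw [Finset.sum_range_succ] at h
    obtain ⟨U, hUT, hUcard⟩ := Finset.exists_subset_card_eq (s := T) (n := ∑ j ∈ Finset.range n, c j)
      (by omega)
    obtain ⟨g, hg1, hg2⟩ := ih c U hUcard.symm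
    refine ⟨fun i => if i ∈ U then g i else n, ?_, ?_⟩
    · intro i _
      by_cases hi : i ∈ U
      · simp only [hi, if_pos]
        exact Nat.lt_succ_of_lt (hg1 i hi)
      · simp [hi]
    · intro j hj
      rcases Nat.lt_succ_iff_lt_or_eq.mp hj with hj' | rfl
      · have : T.filter (fun i => (if i ∈ U then g i else n) = j)
            = U.filter (fun i => g i = j) := by
          ext i
          simp only [Finset.mem_filter]
          constructor
          · rintro ⟨hiT, hij⟩
            by_cases hi : i ∈ U
            · rw [if_pos hi] at hij; exact ⟨hi, hij⟩
            · rw [if_neg hi] at hij; omega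
          · rintro ⟨hiU, hij⟩
            exact ⟨hUT hiU, by rw [if_pos hiU]; exact hij⟩
        rw [this, hg2 j hj']
      · have : T.filter (fun i => (if i ∈ U then g i else j) = j) = T \ U := by
          ext i
          simp only [Finset.mem_filter, Finset.mem_sdiff]
          constructor
          · rintro ⟨hiT, hij⟩
            refine ⟨hiT, fun hi => ?_⟩
            rw [if_pos hi] at hij
            exact absurd (hij ▸ hg1 i hi) (lt_irrefl j)
          · rintro ⟨hiT, hiU⟩
            exact ⟨hiT, by rw [if_neg hiU]⟩
        rw [this, Finset.card_sdiff_of_subset hUT, hUcard]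
        omega

lemma sum_fiber {Agt : Type*} [DecidableEq Agt] {m : ℕ}
    (S : Finset Agt) (f : Agt → ℕ) (hf : ∀ i ∈ S, f i < m) :
    ∑ j : Fin m, (S.filter (fun i => f i = (j : ℕ))).card = S.card := by
  rw [Fin.sum_univ_eq_sum_range (fun j => (S.filter (fun i => f i = j)).card) m]
  rw [Finset.card_eq_sum_card_fiberwise (f := f) (t := Finset.range m)
    (fun i hi => Finset.mem_range.mpr (hf i hi))]

/-- At a state with agents partitioned into roles, for any coalition `C` and
any CGS-strategy choice `s` at that state, the successors reachable in the
RCGS under complete profiles extending the aggregated profile of `s` coincide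
with the successors reachable in the translated CGS under complete action
tuples extending `s`; consequently the families of enforceable successor sets
(`force`) coincide. -/
theorem succ_and_force_eq {Agt Q : Type*} [Fintype Agt] [DecidableEq Agt]
    {k : ℕ} (role : Agt → Fin k) (act : Fin k → ℕ) (ha : ∀ r, 1 ≤ act r)
    (δ : ((r : Fin k) → Fin (act r) → ℕ) → Q) (C : Finset Agt) :
    (∀ s : Agt → ℕ, (∀ i, s i < act (role i)) →
      {q' : Q | ∃ P : (r : Fin k) → Fin (act r) → ℕ,
        (∀ r, ∑ j, P r j = (Finset.univ.filter (fun i => role i = r)).card) ∧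
        (∀ (r : Fin k) (j : Fin (act r)),
          (C.filter (fun i => role i = r ∧ s i = (j : ℕ))).card ≤ P r j) ∧
        δ P = q'} =
      {q' : Q | ∃ α : Agt → ℕ, (∀ i, α i < act (role i)) ∧ (∀ i ∈ C, α i = s i) ∧
        δ (fun r j => (Finset.univ.filter (fun i => role i = r ∧ α i = (j : ℕ))).card)
          = q'}) ∧
    -- force(S, C) = force(f(S), C):
    ({X : Set Q | ∃ F : (r : Fin k) → Fin (act r) → ℕ,
        (∀ r, ∑ j, F r j = (C.filter (fun i => role i = r)).card) ∧
        X = {q' : Q | ∃ P : (r : Fin k) → Fin (act r) → ℕ,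
          (∀ r, ∑ j, P r j = (Finset.univ.filter (fun i => role i = r)).card) ∧
          (∀ r j, F r j ≤ P r j) ∧ δ P = q'}} =
      {X : Set Q | ∃ s : Agt → ℕ, (∀ i, s i < act (role i)) ∧
        X = {q' : Q | ∃ α : Agt → ℕ, (∀ i, α i < act (role i)) ∧ (∀ i ∈ C, α i = s i) ∧
          δ (fun r j => (Finset.univ.filter (fun i => role i = r ∧ α i = (j : ℕ))).card)
            = q'}}) := by
  have key : ∀ s : Agt → ℕ, (∀ i, s i < act (role i)) →
      {q' : Q | ∃ P : (r : Fin k) → Fin (act r) → ℕ,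
        (∀ r, ∑ j, P r j = (Finset.univ.filter (fun i => role i = r)).card) ∧
        (∀ (r : Fin k) (j : Fin (act r)),
          (C.filter (fun i => role i = r ∧ s i = (j : ℕ))).card ≤ P r j) ∧
        δ P = q'} =
      {q' : Q | ∃ α : Agt → ℕ, (∀ i, α i < act (role i)) ∧ (∀ i ∈ C, α i = s i) ∧
        δ (fun r j => (Finset.univ.filter (fun i => role i = r ∧ α i = (j : ℕ))).card)
          = q'} := by
    intro s hs
    ext q'
    simp only [Set.mem_setOf_eq]
    constructor
    · rintro ⟨P, hsum, hle, rfl⟩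
      -- remainder counts
      set cnt : Fin k → ℕ → ℕ :=
        fun r j => (C.filter (fun i => role i = r ∧ s i = j)).card with hcnt
      set c : Fin k → ℕ → ℕ :=
        fun r j => (if h : j < act r then P r ⟨j, h⟩ else 0) - cnt r j with hc
      set T : Fin k → Finset Agt :=
        fun r => Finset.univ.filter (fun i => role i = r ∧ i ∉ C) with hT
      have hTsum : ∀ r, (∑ j ∈ Finset.range (act r), c r j) = (T r).card := by
        intro r
        have hcntsum : ∑ j : Fin (act r), cnt r (j : ℕ)
            = (C.filter (fun i => role i = r)).card := by
          have := sum_fiber (C.filter (fun i => role i = r)) s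
            (fun i hi => by
              have := (Finset.mem_filter.mp hi).2
              simpa [this] using hs i)
          rw [← this]
          congr 1; funext j
          rw [hcnt, Finset.filter_filter]
        have hPsum : ∑ j : Fin (act r), P r j
            = (Finset.univ.filter (fun i => role i = r)).card := hsum r
        have hTcard : (T r).card
            = (Finset.univ.filter (fun i => role i = r)).card
              - (C.filter (fun i => role i = r)).card := by
          have hsub : C.filter (fun i => role i = r)
              ⊆ Finset.univ.filter (fun i => role i = r) := by
            intro i hi
            simp only [Finset.mem_filter] at hi ⊢
            exact ⟨Finset.mem_univ i, hi.2⟩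
          have : T r = Finset.univ.filter (fun i => role i = r)
              \ C.filter (fun i => role i = r) := by
            ext i
            simp only [hT, Finset.mem_filter, Finset.mem_sdiff, Finset.mem_univ,
              true_and]
            tauto
          rw [this, Finset.card_sdiff_of_subset hsub]
        rw [← Fin.sum_univ_eq_sum_range (fun j => c r j) (act r)]
        have hceq : ∀ j : Fin (act r), c r (j : ℕ) = P r j - cnt r (j : ℕ) := by
          intro j
          simp [hc]
        rw [Finset.sum_congr rfl (fun j _ => hceq j)]
        rw [Finset.sum_tsub_distrib Finset.univ (fun j _ => hle r j), hcntsum, hPsum, hTcard]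
      choose g hg1 hg2 using fun r => exists_fn (act r) (c r) (T r) (hTsum r)
      refine ⟨fun i => if i ∈ C then s i else g (role i) i, ?_, ?_, ?_⟩
      · intro i
        by_cases hi : i ∈ C
        · simpa [hi] using hs i
        · have hiT : i ∈ T (role i) := by simp [hT, hi]
          simpa [hi] using hg1 (role i) i hiT
      · intro i hi; simp [hi]
      · congr 1
        funext r j
        have hsplit : Finset.univ.filter
            (fun i => role i = r ∧ (if i ∈ C then s i else g (role i) i) = (j : ℕ))
            = (C.filter (fun i => role i = r ∧ s i = (j : ℕ)))
              ∪ ((T r).filter (fun i => g r i = (j : ℕ))) := by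
          ext i
          simp only [Finset.mem_filter, Finset.mem_union, Finset.mem_univ, true_and,
            hT]
          constructor
          · rintro ⟨hr, hv⟩
            by_cases hi : i ∈ C
            · left; rw [if_pos hi] at hv; exact ⟨hi, hr, hv⟩
            · right; rw [if_neg hi] at hv
              exact ⟨⟨hr, hi⟩, by rw [hr] at hv; exact hv⟩
          · rintro (⟨hi, hr, hv⟩ | ⟨⟨hr, hi⟩, hv⟩)
            · exact ⟨hr, by rw [if_pos hi]; exact hv⟩
            · exact ⟨hr, by rw [if_neg hi, hr]; exact hv⟩
        have hdisj : Disjoint (C.filter (fun i => role i = r ∧ s i = (j : ℕ)))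
            ((T r).filter (fun i => g r i = (j : ℕ))) := by
          rw [Finset.disjoint_left]
          intro i hi1 hi2
          have := (Finset.mem_filter.mp hi1).1
          have := (Finset.mem_filter.mp (Finset.mem_filter.mp hi2).1).2.2
          tauto
        rw [hsplit, Finset.card_union_of_disjoint hdisj]
        have hgc := hg2 r (j : ℕ) j.2
        have : c r (j : ℕ) = P r j - cnt r (j : ℕ) := by simp [hc]
        rw [hgc, this]
        have := hle r j
        simp only [hcnt] at *
        omega
    · rintro ⟨α, hα, hαs, rfl⟩
      refine ⟨fun r j => (Finset.univ.filter (fun i => role i = r ∧ α i = (j : ℕ))).card,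
        ?_, ?_, rfl⟩
      · intro r
        have := sum_fiber (Finset.univ.filter (fun i => role i = r)) α
          (fun i hi => by
            have := (Finset.mem_filter.mp hi).2
            simpa [this] using hα i)
        rw [← this]
        congr 1; funext j
        rw [Finset.filter_filter]
      · intro r j
        apply Finset.card_le_card
        intro i hi
        simp only [Finset.mem_filter, Finset.mem_univ, true_and] at hi ⊢
        exact ⟨hi.2.1, by rw [hαs i hi.1]; exact hi.2.2⟩
  refine ⟨key, ?_⟩
  ext X
  simp only [Set.mem_setOf_eq]
  constructor
  · rintro ⟨F, hF, rfl⟩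
    -- build s realizing the counts F on C
    set c : Fin k → ℕ → ℕ :=
      fun r j => if h : j < act r then F r ⟨j, h⟩ else 0 with hc
    have hsum : ∀ r, (∑ j ∈ Finset.range (act r), c r j)
        = (C.filter (fun i => role i = r)).card := by
      intro r
      rw [← Fin.sum_univ_eq_sum_range (fun j => c r j) (act r), ← hF r]
      apply Finset.sum_congr rfl
      intro j _
      simp [hc]
    choose g hg1 hg2 using fun r =>
      exists_fn (act r) (c r) (C.filter (fun i => role i = r)) (hsum r)
    set s : Agt → ℕ := fun i => if i ∈ C then g (role i) i else 0 with hsdef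
    have hsb : ∀ i, s i < act (role i) := by
      intro i
      by_cases hi : i ∈ C
      · have : i ∈ C.filter (fun j => role j = role i) := by simp [hi]
        simpa [hsdef, hi] using hg1 (role i) i this
      · simp only [hsdef, hi, if_false]; exact ha (role i)
    have hcount : ∀ (r : Fin k) (j : Fin (act r)),
        (C.filter (fun i => role i = r ∧ s i = (j : ℕ))).card = F r j := by
      intro r j
      have : C.filter (fun i => role i = r ∧ s i = (j : ℕ))
          = (C.filter (fun i => role i = r)).filter (fun i => g r i = (j : ℕ)) := by
        ext i
        simp only [Finset.mem_filter, and_assoc]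
        constructor
        · rintro ⟨hi, hr, hsi⟩
          exact ⟨hi, hr, by simpa [hsdef, hi, hr] using hsi⟩
        · rintro ⟨hi, hr, hgi⟩
          exact ⟨hi, hr, by simp [hsdef, hi, hr, hgi]⟩
      rw [this, hg2 r (j : ℕ) j.2]
      simp [hc]
    refine ⟨s, hsb, ?_⟩
    rw [← key s hsb]
    ext q'
    simp only [Set.mem_setOf_eq]
    constructor
    · rintro ⟨P, h1, h2, h3⟩
      exact ⟨P, h1, fun r j => (hcount r j) ▸ h2 r j, h3⟩
    · rintro ⟨P, h1, h2, h3⟩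
      exact ⟨P, h1, fun r j => (hcount r j) ▸ h2 r j, h3⟩
  · rintro ⟨s, hsb, rfl⟩
    refine ⟨fun r j => (C.filter (fun i => role i = r ∧ s i = (j : ℕ))).card, ?_, ?_⟩
    · intro r
      have := sum_fiber (C.filter (fun i => role i = r)) s
        (fun i hi => by
          have := (Finset.mem_filter.mp hi).2
          simpa [this] using hsb i)
      rw [← this]
      congr 1; funext j
      rw [Finset.filter_filter]
    · rw [← key s hsb]
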